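/- (Sarkaria–Onn lemma) Let 𝒫 = (P_1, …, P_r) be an r-partition in ℝ^d. Then ⋂_{i=1}^r conv(P_i) ≠ ∅ if and only if 0 ∈ S_𝒫 = conv(Φ(𝒫)). -/

import Mathlib

open Finset

namespace BMZ

noncomputable section

/-- Points of `ℝ^d`. -/
abbrev Pt (d : ℕ) := EuclideanSpace ℝ (Fin d)

/-- The space `ℝ^N`, `N = (d+1)(r-1)`, with `r = s+2`, presented with double
indices `(k, l) ∈ [d+1] × [r-1]`. -/
abbrev CSp (d s : ℕ) := EuclideanSpace ℝ (Fin (d + 1) × Fin (s + 1))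

/-- `w` is the vertex set of a regular `(r-1)`-dimensional simplex centered at the
origin (here `r = s+2`): the vertices are affinely independent, pairwise
equidistant with a positive common distance, and their barycenter is the origin. -/
def IsRegularSimplex {s : ℕ} (w : Fin (s + 2) → EuclideanSpace ℝ (Fin (s + 1))) : Prop :=
  AffineIndependent ℝ w ∧
    (∃ e : ℝ, 0 < e ∧ ∀ i j, i ≠ j → dist (w i) (w j) = e) ∧
    ∑ i, w i = 0

/-- `x⁺ = (x, 1) ∈ ℝ^{d+1}`. -/
def xplus {d : ℕ} (x : Pt d) : Fin (d + 1) → ℝ := Fin.snoc (x : Fin d → ℝ) 1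

/-- The `i`-th clone `φ_i(x) := x⁺ ⊗ w_i ∈ ℝ^N`. -/
def clone {d s : ℕ} (w : Fin (s + 2) → EuclideanSpace ℝ (Fin (s + 1)))
    (x : Pt d) (i : Fin (s + 2)) : CSp d s :=
  WithLp.toLp 2 fun kl : Fin (d + 1) × Fin (s + 1) => xplus x kl.1 * w i kl.2

/-- The Sarkaria–Onn transform `Φ(𝒫)` of an `r`-partition `𝒫 = (P_1, …, P_r)`:
for every point `p ∈ P_i` we put the `i`-th clone of `p` into `Φ(𝒫)`. -/
def Phi {d s : ℕ} (w : Fin (s + 2) → EuclideanSpace ℝ (Fin (s + 1)))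
    (P : Fin (s + 2) → Finset (Pt d)) : Set (CSp d s) :=
  ⋃ i, (fun p => clone w p i) '' (P i : Set (Pt d))

/-- `N = (d+1)(r-1)`, the number of points of a BMZ-collection other than `z`. -/
abbrev NN (d s : ℕ) : ℕ := (d + 1) * (s + 1)

/-- Indices of the points `c_1, …, c_{N+1}` of a BMZ-collection (the last point
is `z`). A BMZ-collection is an injective map `c : Idx d s → Pt d`, with the color
classes `C_1, …, C_{d+2}` consisting of consecutive points as given by `colorOf`. -/
abbrev Idx (d s : ℕ) := Fin (NN d s + 1)

/-- The color of the `i`-th point: each of the first `d+1` classes consists of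
`r-1` consecutive points, and the last class is the singleton `{z}`. -/
def colorOf (d s : ℕ) (i : Idx d s) : Fin (d + 2) :=
  if h : (i : ℕ) < NN d s then
    Fin.castSucc ⟨(i : ℕ) / (s + 1),
      Nat.div_lt_of_lt_mul (by rw [Nat.mul_comm]; exact h)⟩
  else Fin.last (d + 1)

/-- Maximal rainbow `r`-partitions `ℛ = (R_1, …, R_r) ∈ 𝔅(𝒞)` (with `z ∈ R_r`) are
in bijective correspondence with tuples of permutations `π_k` of `[r]`, one for
each of the first `d+1` colors: `π_k j` is the index of the class containing the
`j`-th point of `C_k` for `j ≤ r-1`, and `π_k r` is the index of the unique class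
containing no point of `C_k`. -/
abbrev PartEnc (d s : ℕ) := Fin (d + 1) → Equiv.Perm (Fin (s + 2))

/-- The class of the `i`-th point in the partition encoded by `σ`; the point `z`
lies in the last class. -/
def classOf {d s : ℕ} (σ : PartEnc d s) (i : Idx d s) : Fin (s + 2) :=
  if h : (i : ℕ) < NN d s then
    σ ⟨(i : ℕ) / (s + 1), Nat.div_lt_of_lt_mul (by rw [Nat.mul_comm]; exact h)⟩
      (Fin.castSucc ⟨(i : ℕ) % (s + 1), Nat.mod_lt _ (Nat.succ_pos s)⟩)
  else Fin.last (s + 1)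

variable {d s : ℕ}

open Classical in
/-- The `k`-th color class of the configuration `c`, as a finite set of points. -/
def colorClass (c : Idx d s → Pt d) (k : Fin (d + 2)) : Finset (Pt d) :=
  (Finset.univ.filter fun i => colorOf d s i = k).image c

open Classical in
/-- The class `R_i` of the partition encoded by `σ`, as a finite set of points. -/
def classSet (c : Idx d s → Pt d) (σ : PartEnc d s) (i : Fin (s + 2)) : Finset (Pt d) :=
  (Finset.univ.filter fun j => classOf σ j = i).image c

/-- `σ` encodes a Tverberg partition: the convex hulls of its classes have a
common point. -/
def IsTverberg (c : Idx d s → Pt d) (σ : PartEnc d s) : Prop :=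
  (⋂ i, convexHull ℝ (classSet c σ i : Set (Pt d))).Nonempty

/-- The clones of all the points of the configuration, w.r.t. the partition `σ`. -/
def allClones (w : Fin (s + 2) → EuclideanSpace ℝ (Fin (s + 1)))
    (c : Idx d s → Pt d) (σ : PartEnc d s) : Idx d s → CSp d s :=
  fun i => clone w (c i) (classOf σ i)

/-- The vertices of `F_ℛ = conv Φ(ℛ - z)`, ordered by the numbering of the points. -/
def rows (w : Fin (s + 2) → EuclideanSpace ℝ (Fin (s + 1)))
    (c : Idx d s → Pt d) (σ : PartEnc d s) : Fin (NN d s) → CSp d s :=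
  fun i => allClones w c σ i.castSucc

/-- `Φ(ℛ - a)`: the clones of all points except `a`. -/
def PhiMinus (w : Fin (s + 2) → EuclideanSpace ℝ (Fin (s + 1)))
    (c : Idx d s → Pt d) (σ : PartEnc d s) (a : Idx d s) : Set (CSp d s) :=
  allClones w c σ '' {i | i ≠ a}

/-- The simplex `F_ℛ = conv Φ(ℛ - z)`. -/
def Fface (w : Fin (s + 2) → EuclideanSpace ℝ (Fin (s + 1)))
    (c : Idx d s → Pt d) (σ : PartEnc d s) : Set (CSp d s) :=
  convexHull ℝ (Set.range (rows w c σ))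

/-- `𝒞` is in sufficiently general position: each `Φ(ℛ - z)` is affinely
independent, and `0 ∉ aff Φ(ℛ - a)` for all `ℛ ∈ 𝔅(𝒞)` and `a ∈ C`. -/
def SuffGenPos (w : Fin (s + 2) → EuclideanSpace ℝ (Fin (s + 1)))
    (c : Idx d s → Pt d) : Prop :=
  (∀ σ : PartEnc d s, AffineIndependent ℝ (rows w c σ)) ∧
  (∀ (σ : PartEnc d s) (a : Idx d s), (0 : CSp d s) ∉ affineSpan ℝ (PhiMinus w c σ a))

/-- A ridge `conv Φ(ℛ - z - a)`, `a ∈ C \ {z}`. -/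
def ridge (w : Fin (s + 2) → EuclideanSpace ℝ (Fin (s + 1)))
    (c : Idx d s → Pt d) (σ : PartEnc d s) (a : Fin (NN d s)) : Set (CSp d s) :=
  convexHull ℝ (rows w c σ '' {i | i ≠ a})

/-- `𝒞` is in almost general position: all ridges avoid the origin. -/
def AlmostGenPos (w : Fin (s + 2) → EuclideanSpace ℝ (Fin (s + 1)))
    (c : Idx d s → Pt d) : Prop :=
  ∀ (σ : PartEnc d s) (a : Fin (NN d s)), (0 : CSp d s) ∉ ridge w c σ a

/-- The ray emanating from `0` in the direction `u`. -/
def raySet (u : CSp d s) : Set (CSp d s) := {x | ∃ t : ℝ, 0 ≤ t ∧ x = t • u}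

/-- A ray emanating from `0` is generic for `𝒞` if it intersects no ridge. -/
def GenericRay (w : Fin (s + 2) → EuclideanSpace ℝ (Fin (s + 1)))
    (c : Idx d s → Pt d) (u : CSp d s) : Prop :=
  ∀ (σ : PartEnc d s) (a : Fin (NN d s)), ∀ x ∈ raySet u, x ∉ ridge w c σ a

/-- The combinatorial sign `csgn(ℛ) = ∏_k sgn(π_k)`. -/
def csgn (σ : PartEnc d s) : ℤ := ∏ k, (Equiv.Perm.sign (σ k) : ℤ)

/-- The sign of a real number, as an integer. -/
def sgnR (x : ℝ) : ℤ := if 0 < x then 1 else if x < 0 then -1 else 0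

/-- The geometric sign `gsgn(ℛ)`: the sign of the determinant of the `N × N`
matrix whose rows are the vertices of `F_ℛ`, ordered by the numbering of the
points of `C`. -/
def gsgn (w : Fin (s + 2) → EuclideanSpace ℝ (Fin (s + 1)))
    (c : Idx d s → Pt d) (σ : PartEnc d s) : ℤ :=
  sgnR (Matrix.det (Matrix.of fun i j : Fin (NN d s) =>
    rows w c σ i (finProdFinEquiv.symm j)))

/-- The sign `sgn(ℛ) = gsgn(ℛ) ⬝ csgn(ℛ)`. -/
def psgn (w : Fin (s + 2) → EuclideanSpace ℝ (Fin (s + 1)))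
    (c : Idx d s → Pt d) (σ : PartEnc d s) : ℤ :=
  gsgn w c σ * csgn σ

/-- `z* = φ_r(z)`. -/
def zstar (w : Fin (s + 2) → EuclideanSpace ℝ (Fin (s + 1)))
    (c : Idx d s → Pt d) : CSp d s :=
  clone w (c (Fin.last (NN d s))) (Fin.last (s + 1))

open Classical in
/-- The degree of `𝒞` measured along the ray from `0` in direction `u`:
`deg_ψ(𝒞) = Σ_{ℛ ∈ 𝔅(𝒞), ψ ∩ F_ℛ ≠ ∅} sgn(ℛ)`. -/
def degRay (w : Fin (s + 2) → EuclideanSpace ℝ (Fin (s + 1)))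
    (c : Idx d s → Pt d) (u : CSp d s) : ℤ :=
  ∑ σ : PartEnc d s, if (raySet u ∩ Fface w c σ).Nonempty then psgn w c σ else 0

/-- The degree `deg(𝒞)`, measured along the ray `ρ` emanating from `0` in the
direction `-z*`. -/
def degC (w : Fin (s + 2) → EuclideanSpace ℝ (Fin (s + 1)))
    (c : Idx d s → Pt d) : ℤ :=
  degRay w c (-(zstar w c))

end

end BMZ


section SOAux

open BMZ Finset

private lemma euc_sum_apply {ι κ : Type*} (t : Finset ι) (f : ι → EuclideanSpace ℝ κ) (k : κ) :
    (∑ i ∈ t, f i) k = ∑ i ∈ t, f i k :=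
  by rw [WithLp.ofLp_sum]; exact Finset.sum_apply k t _

private lemma xplus_castSucc {d : ℕ} (x : Pt d) (k : Fin d) :
    xplus x k.castSucc = x k := by
  simp [xplus]

private lemma xplus_last {d : ℕ} (x : Pt d) : xplus x (Fin.last d) = 1 := by
  simp [xplus]

/-- If the vertices of a regular simplex satisfy a linear relation, the coefficients
are all equal. -/
private lemma const_coeffs {s : ℕ} {w : Fin (s + 2) → EuclideanSpace ℝ (Fin (s + 1))}
    (haff : AffineIndependent ℝ w) (hsum : ∑ i, w i = 0)
    {c : Fin (s + 2) → ℝ} (hc : ∑ j, c j • w j = 0) (j j' : Fin (s + 2)) : c j = c j' := by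
  set m : ℝ := (∑ j, c j) / (s + 2) with hm
  have h0 : ∑ j, (c j - m) = 0 := by
    rw [Finset.sum_sub_distrib, Finset.sum_const, Finset.card_univ, Fintype.card_fin, hm]
    have : ((s : ℝ) + 2) ≠ 0 := by positivity
    rw [nsmul_eq_mul]; push_cast
    field_simp
    ring
  have h1 : Finset.univ.weightedVSub w (fun j => c j - m) = 0 := by
    rw [Finset.weightedVSub_eq_linear_combination _ h0]
    have : ∑ j, (c j - m) • w j = (∑ j, c j • w j) - m • ∑ j, w j := by
      rw [Finset.smul_sum, ← Finset.sum_sub_distrib]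
      exact Finset.sum_congr rfl fun j _ => by rw [sub_smul]
    rw [this, hc, hsum, smul_zero, sub_zero]
  have h2 := (affineIndependent_iff_of_fintype ℝ w).mp haff _ h0 h1
  have hj : c j - m = 0 := h2 j
  have hj' : c j' - m = 0 := h2 j'
  linarith

end SOAux

open BMZ in
/-- **Sarkaria–Onn lemma.**
Let `𝒫 = (P_1, …, P_r)` be an `r`-partition in `ℝ^d` (here `r = s+2 ≥ 2`).
Then `⋂_i conv(P_i) ≠ ∅` if and only if `0 ∈ S_𝒫 = conv(Φ(𝒫))`. -/
theorem sarkaria_onn (d s : ℕ) (hd : 1 ≤ d)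
    (w : Fin (s + 2) → EuclideanSpace ℝ (Fin (s + 1))) (hw : IsRegularSimplex w)
    (P : Fin (s + 2) → Finset (Pt d))
    (hP : Pairwise fun i i' => Disjoint (P i) (P i')) :
    (⋂ i, convexHull ℝ (P i : Set (Pt d))).Nonempty ↔
      (0 : CSp d s) ∈ convexHull ℝ (Phi w P) := by
  classical
  obtain ⟨haff, -, hsum⟩ := hw
  have hwl : ∀ l, ∑ i, w i l = 0 := by
    intro l
    rw [← euc_sum_apply, hsum]
    rfl
  have hr0 : ((s : ℝ) + 2) ≠ 0 := by positivity
  constructor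
  · rintro ⟨x, hx⟩
    simp only [Set.mem_iInter] at hx
    have hx' : ∀ i, ∃ μ : Pt d → ℝ, (∀ y ∈ P i, 0 ≤ μ y) ∧ ∑ y ∈ P i, μ y = 1 ∧
        (P i).centerMass μ id = x := fun i => by
      have h := hx i
      rw [Finset.convexHull_eq] at h
      exact h
    choose μ hμ0 hμ1 hμx using hx'
    have hxp : ∀ i (k : Fin (d + 1)), ∑ p ∈ P i, μ i p * xplus p k = xplus x k := by
      intro i k
      induction k using Fin.lastCases with
      | last =>
        simp only [xplus_last, mul_one]
        exact hμ1 i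
      | cast k =>
        simp only [xplus_castSucc]
        have h := hμx i
        rw [Finset.centerMass_eq_of_sum_1 _ _ (hμ1 i)] at h
        have := congrArg (fun v : Pt d => v k) h
        dsimp at this
        rw [euc_sum_apply] at this
        exact this
    rw [_root_.convexHull_eq]
    refine ⟨(_ : Fin (s + 2)) × Pt d, Finset.univ.sigma (fun i => P i),
      fun ip => μ ip.1 ip.2 / (s + 2), fun ip => clone w ip.2 ip.1, ?_, ?_, ?_, ?_⟩
    · rintro ⟨i, p⟩ hip
      rw [Finset.mem_sigma] at hip
      exact div_nonneg (hμ0 i p hip.2) (by positivity)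
    · rw [Finset.sum_sigma]
      have : ∀ i ∈ (Finset.univ : Finset (Fin (s + 2))),
          ∑ p ∈ P i, μ i p / (s + 2) = 1 / (s + 2) := by
        intro i _
        rw [← Finset.sum_div, hμ1]
      rw [Finset.sum_congr rfl this, Finset.sum_const, Finset.card_univ, Fintype.card_fin]
      rw [nsmul_eq_mul]; push_cast
      field_simp
    · rintro ⟨i, p⟩ hip
      rw [Finset.mem_sigma] at hip
      exact Set.mem_iUnion.mpr ⟨i, ⟨p, hip.2, rfl⟩⟩
    · have hsum1 : ∑ ip ∈ Finset.univ.sigma (fun i => P i),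
          μ ip.1 ip.2 / ((s : ℝ) + 2) = 1 := by
        rw [Finset.sum_sigma]
        have : ∀ i ∈ (Finset.univ : Finset (Fin (s + 2))),
            ∑ p ∈ P i, μ i p / (s + 2) = 1 / (s + 2) := by
          intro i _
          rw [← Finset.sum_div, hμ1]
        rw [Finset.sum_congr rfl this, Finset.sum_const, Finset.card_univ, Fintype.card_fin]
        rw [nsmul_eq_mul]; push_cast
        field_simp
      rw [Finset.centerMass_eq_of_sum_1 _ _ hsum1]
      ext kl
      rw [euc_sum_apply]
      simp only [PiLp.smul_apply, PiLp.zero_apply, smul_eq_mul]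
      show ∑ ip ∈ Finset.univ.sigma (fun i => P i),
        (μ ip.1 ip.2 / ((s : ℝ) + 2)) * (xplus ip.2 kl.1 * w ip.1 kl.2) = 0
      rw [Finset.sum_sigma]
      have hinner : ∀ i ∈ (Finset.univ : Finset (Fin (s + 2))),
          ∑ p ∈ P i, (μ i p / ((s : ℝ) + 2)) * (xplus p kl.1 * w i kl.2)
            = xplus x kl.1 / (s + 2) * w i kl.2 := by
        intro i _
        have : ∀ p ∈ P i, (μ i p / ((s : ℝ) + 2)) * (xplus p kl.1 * w i kl.2)
            = (μ i p * xplus p kl.1) * (w i kl.2 / (s + 2)) := fun p _ => by ring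
        rw [Finset.sum_congr rfl this, ← Finset.sum_mul, hxp]
        ring
      rw [Finset.sum_congr rfl hinner, ← Finset.mul_sum, hwl, mul_zero]
  · intro h0
    rw [_root_.convexHull_eq] at h0
    obtain ⟨ι, t, a, z, ha0, ha1, hzmem, hcm⟩ := h0
    have hz' : ∀ i : ι, ∃ (j : Fin (s + 2)) (q : Pt d), i ∈ t → q ∈ P j ∧ clone w q j = z i := by
      intro i
      by_cases hi : i ∈ t
      · have h := hzmem i hi
        simp only [Phi, Set.mem_iUnion, Set.mem_image, Finset.mem_coe] at h
        obtain ⟨j, q, hq, hcl⟩ := h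
        exact ⟨j, q, fun _ => ⟨hq, hcl⟩⟩
      · exact ⟨0, 0, fun h => absurd h hi⟩
    choose cls q hq using hz'
    set v : Fin (s + 2) → Fin (d + 1) → ℝ :=
      fun j k => ∑ i ∈ t.filter (fun i => cls i = j), a i * xplus (q i) k with hv
    have hsum0 : ∑ i ∈ t, a i • z i = 0 := by
      rw [← Finset.centerMass_eq_of_sum_1 _ _ ha1, hcm]
    have hkey : ∀ (k : Fin (d + 1)) (l : Fin (s + 1)), ∑ j, v j k * w j l = 0 := by
      intro k l
      have h := congrArg (fun f : CSp d s => f (k, l)) hsum0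
      dsimp at h
      rw [euc_sum_apply] at h
      have h2 : ∑ i ∈ t, a i * (xplus (q i) k * w (cls i) l) = 0 := by
        rw [← h]
        refine Finset.sum_congr rfl fun i hi => ?_
        have hcl := (hq i hi).2
        rw [← hcl]
        rw [PiLp.smul_apply, smul_eq_mul]; rfl
      rw [← Finset.sum_fiberwise t cls (fun i => a i * (xplus (q i) k * w (cls i) l))] at h2
      rw [← h2]
      refine Finset.sum_congr rfl fun j _ => ?_
      rw [hv]
      dsimp only
      rw [Finset.sum_mul]
      refine Finset.sum_congr rfl fun i hi => ?_
      rw [Finset.mem_filter] at hi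
      rw [hi.2]
      ring
    have hconst : ∀ (k : Fin (d + 1)) (j j' : Fin (s + 2)), v j k = v j' k := by
      intro k j j'
      refine const_coeffs haff hsum (c := fun j => v j k) ?_ j j'
      ext l
      rw [euc_sum_apply]
      show ∑ j, v j k * w j l = 0
      exact hkey k l
    set m : Fin (s + 2) → ℝ := fun j => ∑ i ∈ t.filter (fun i => cls i = j), a i with hmdef
    have hmv : ∀ j, m j = v j (Fin.last d) := by
      intro j
      rw [hmdef, hv]
      dsimp only
      refine Finset.sum_congr rfl fun i _ => ?_
      rw [xplus_last, mul_one]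
    have hmsum : ∑ j, m j = 1 := by
      rw [hmdef]
      dsimp only
      rw [Finset.sum_fiberwise t cls a]
      exact ha1
    have hmconst : ∀ j, m j = 1 / (s + 2) := by
      intro j
      have heach : ∀ j', m j' = m j := fun j' => by
        rw [hmv, hmv]; exact hconst _ j' j
      have : ∑ j' : Fin (s + 2), m j' = (s + 2) * m j := by
        rw [Finset.sum_congr rfl fun j' _ => heach j', Finset.sum_const, Finset.card_univ,
          Fintype.card_fin, nsmul_eq_mul]
        push_cast
        ring
      rw [hmsum] at this
      field_simp
      linarith
    have hmpos : ∀ j, 0 < m j := by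
      intro j
      rw [hmconst]
      positivity
    set x : Pt d := WithLp.toLp 2 fun k : Fin d => (m 0)⁻¹ * v 0 k.castSucc with hx
    refine ⟨x, Set.mem_iInter.mpr fun j => ?_⟩
    have hcm2 : (t.filter (fun i => cls i = j)).centerMass a q = x := by
      rw [Finset.centerMass]
      ext k
      show (m j)⁻¹ * (∑ i ∈ t.filter (fun i => cls i = j), a i • q i) k = x k
      rw [euc_sum_apply]
      have : ∑ i ∈ t.filter (fun i => cls i = j), (a i • q i) k
          = v j k.castSucc := by
        rw [hv]
        dsimp only
        refine Finset.sum_congr rfl fun i _ => ?_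
        rw [xplus_castSucc]
        rfl
      rw [this, hx]
      show (m j)⁻¹ * v j k.castSucc = (m 0)⁻¹ * v 0 k.castSucc
      rw [hmconst j, hmconst 0, hconst k.castSucc j 0]
    rw [← hcm2]
    refine Finset.centerMass_mem_convexHull _ (fun i hi => ha0 i (Finset.mem_filter.mp hi).1)
      (hmpos j) (fun i hi => ?_)
    rw [Finset.mem_filter] at hi
    have := (hq i hi.1).1
    rw [hi.2] at this
    exact Finset.mem_coe.mpr this
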